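/- Let α be a presymplectic confoliation form on a closed M^{2n+1} (dα has rank 2n everywhere, α(R) ≥ 0 for the Reeb field R of dα) and suppose R admits a connection form η (η(R)=1, ι_R dη = 0). Then for all sufficiently small ε > 0 the form α + ε η is a contact form. -/

import Mathlib

set_option maxHeartbeats 1000000


/-- Let `α` be a presymplectic confoliation form on a closed `M^{2n+1}`
(`dα` of rank `2n` everywhere, `α(R) ≥ 0` for the Reeb field `R` of `dα`) and suppose
`R` admits a connection form `η` (`η(R) = 1`, `ι_R dη = 0`).  Then for all
sufficiently small `ε > 0` the form `α + ε η` is a contact form: `(α+εη)(R) > 0`,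
`ι_R d(α+εη) = 0`, and `d(α+εη) = dα + ε dη` is nondegenerate on a complement of `R`.
Trivialized-bundle conventions: `M` compact, fibre a finite-dimensional normed space
`E`, the differentials `dα`, `dη` given as continuous families of alternating forms,
and the complement of `R` given as `range (P x)` for a continuous idempotent family
`P` with `ker (P x) = span (R x)`. -/
theorem presymplectic_confoliation_plus_small_connection_is_contact
    {M : Type*} [TopologicalSpace M] [CompactSpace M] [Nonempty M]
    {E : Type*} [NormedAddCommGroup E] [NormedSpace ℝ E] [FiniteDimensional ℝ E]
    (n : ℕ) (hdim : Module.finrank ℝ E = 2 * n + 1)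
    (R : M → E) (hR : Continuous R) (hRne : ∀ x, R x ≠ 0)
    (α η : M → E →L[ℝ] ℝ) (hα : Continuous α) (hη : Continuous η)
    (dα dη : M → E →L[ℝ] E →L[ℝ] ℝ) (hdα : Continuous dα) (hdη : Continuous dη)
    (hdαalt : ∀ x v, dα x v v = 0) (hdηalt : ∀ x v, dη x v v = 0)
    (hReeb : ∀ x w, dα x (R x) w = 0)
    (hconfol : ∀ x, 0 ≤ α x (R x))
    (hconn1 : ∀ x, η x (R x) = 1)
    (hconn2 : ∀ x w, dη x (R x) w = 0)
    (P : M → E →L[ℝ] E) (hP : Continuous P)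
    (hPproj : ∀ x, (P x).comp (P x) = P x)
    (hPker : ∀ x, LinearMap.ker (P x : E →ₗ[ℝ] E) = Submodule.span ℝ {R x})
    (hnondeg : ∀ x, ∀ v ∈ LinearMap.range (P x : E →ₗ[ℝ] E), v ≠ 0 →
      ∃ w ∈ LinearMap.range (P x : E →ₗ[ℝ] E), dα x v w ≠ 0) :
    ∃ ε₀ : ℝ, 0 < ε₀ ∧ ∀ ε : ℝ, 0 < ε → ε ≤ ε₀ →
      (∀ x, 0 < (α x + ε • η x) (R x)) ∧
      (∀ x w, (dα x + ε • dη x) (R x) w = 0) ∧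
      (∀ x, ∀ v ∈ LinearMap.range (P x : E →ₗ[ℝ] E), v ≠ 0 →
        ∃ w ∈ LinearMap.range (P x : E →ₗ[ℝ] E), (dα x + ε • dη x) v w ≠ 0) := by
  classical
  have hfix : ∀ x v, v ∈ LinearMap.range (P x : E →ₗ[ℝ] E) ↔ P x v = v := by
    intro x v
    constructor
    · rintro ⟨y, rfl⟩
      have := congrArg (fun T : E →L[ℝ] E => T y) (hPproj x)
      simpa using this
    · intro h; exact ⟨v, h⟩
  -- the key uniform estimate for nondegeneracy
  have key : ∃ ε₀ : ℝ, 0 < ε₀ ∧ ∀ ε : ℝ, 0 < ε → ε ≤ ε₀ →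
      ∀ x, ∀ v ∈ LinearMap.range (P x : E →ₗ[ℝ] E), v ≠ 0 →
        ∃ w ∈ LinearMap.range (P x : E →ₗ[ℝ] E), (dα x + ε • dη x) v w ≠ 0 := by
    set K : Set (M × E) := {p | ‖p.2‖ = 1 ∧ P p.1 p.2 = p.2} with hKdef
    -- scaling a nonzero v in the range gives a point of K
    have hscale : ∀ x, ∀ v ∈ LinearMap.range (P x : E →ₗ[ℝ] E), v ≠ 0 →
        ((x, ‖v‖⁻¹ • v) ∈ K ∧ v = ‖v‖ • (‖v‖⁻¹ • v)) := by
      intro x v hv hv0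
      have hnv : ‖v‖ ≠ 0 := norm_ne_zero_iff.mpr hv0
      refine ⟨⟨?_, ?_⟩, ?_⟩
      · simp [norm_smul, abs_of_nonneg (norm_nonneg v), inv_mul_cancel₀ hnv]
      · simp only [map_smul]
        rw [(hfix x v).mp hv]
      · rw [smul_smul, mul_inv_cancel₀ hnv, one_smul]
    by_cases hK : K.Nonempty
    · set g : M × E → ℝ := fun p => ‖((dα p.1 p.2).comp (P p.1))‖ with hg
      set h : M × E → ℝ := fun p => ‖((dη p.1 p.2).comp (P p.1))‖ with hh
      have hgc : Continuous g :=
        (((hdα.comp continuous_fst).clm_apply continuous_snd).clm_comp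
          (hP.comp continuous_fst)).norm
      have hhc : Continuous h :=
        (((hdη.comp continuous_fst).clm_apply continuous_snd).clm_comp
          (hP.comp continuous_fst)).norm
      have hKc : IsCompact K := by
        have hcomp : IsCompact ((Set.univ : Set M) ×ˢ Metric.sphere (0 : E) 1) :=
          isCompact_univ.prod (isCompact_sphere 0 1)
        refine IsCompact.of_isClosed_subset hcomp ?_ ?_
        · exact (isClosed_eq continuous_snd.norm continuous_const).inter
            (isClosed_eq ((hP.comp continuous_fst).clm_apply continuous_snd)
              continuous_snd)
        · rintro ⟨x, v⟩ ⟨h1, _⟩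
          exact ⟨Set.mem_univ x, by simpa [mem_sphere_iff_norm] using h1⟩
      obtain ⟨pc, hpcK, hpc⟩ := hKc.exists_isMinOn hK hgc.continuousOn
      obtain ⟨pC, hpCK, hpC⟩ := hKc.exists_isMaxOn hK hhc.continuousOn
      set c : ℝ := g pc with hcdef
      set C : ℝ := h pC with hCdef
      have hCnn : 0 ≤ C := norm_nonneg _
      have hcpos : 0 < c := by
        obtain ⟨hn1, hfix1⟩ := hpcK
        have hv0 : pc.2 ≠ 0 := by
          intro h0; rw [h0] at hn1; simp at hn1
        obtain ⟨w, hw, hw0⟩ := hnondeg pc.1 pc.2 ((hfix pc.1 pc.2).mpr hfix1) hv0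
        have hne : (dα pc.1 pc.2).comp (P pc.1) ≠ 0 := by
          intro h0
          apply hw0
          have := congrArg (fun T : E →L[ℝ] ℝ => T w) h0
          simpa [(hfix pc.1 w).mp hw] using this
        exact norm_pos_iff.mpr hne
      refine ⟨c / (C + 1), div_pos hcpos (by linarith), ?_⟩
      intro ε hε hε' x v hv hv0
      obtain ⟨huK, hvdec⟩ := hscale x v hv hv0
      set u : E := ‖v‖⁻¹ • v with hu
      by_contra hcon
      push_neg at hcon
      -- then (dα x u).comp (P x) = (-ε) • (dη x u).comp (P x)
      have heq : (dα x u).comp (P x) = (-ε) • ((dη x u).comp (P x)) := by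
        ext w₀
        have hPw : P x w₀ ∈ LinearMap.range (P x : E →ₗ[ℝ] E) := ⟨w₀, rfl⟩
        have h0 := hcon (P x w₀) hPw
        have hnv : ‖v‖ ≠ 0 := norm_ne_zero_iff.mpr hv0
        have hval : dα x v (P x w₀) + ε * dη x v (P x w₀) = 0 := by
          simpa [ContinuousLinearMap.add_apply, ContinuousLinearMap.smul_apply,
            smul_eq_mul] using h0
        have hvα : dα x v (P x w₀) = ‖v‖ * dα x u (P x w₀) := by
          conv_lhs => rw [hvdec]
          simp [smul_eq_mul]
        have hvη : dη x v (P x w₀) = ‖v‖ * dη x u (P x w₀) := by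
          conv_lhs => rw [hvdec]
          simp [smul_eq_mul]
        rw [hvα, hvη] at hval
        have : ‖v‖ * (dα x u (P x w₀) + ε * dη x u (P x w₀)) = 0 := by ring_nf; linarith [hval]
        have h2 : dα x u (P x w₀) + ε * dη x u (P x w₀) = 0 :=
          (mul_eq_zero.mp this).resolve_left hnv
        simp only [ContinuousLinearMap.comp_apply, ContinuousLinearMap.smul_apply,
          smul_eq_mul]
        linarith [h2]
      have hgle : g (x, u) = ε * h (x, u) := by
        simp only [hg, hh]
        rw [heq]
        simp [norm_smul, abs_of_pos hε]
      have h1 : c ≤ g (x, u) := hpc huK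
      have h2 : h (x, u) ≤ C := hpC huK
      have hεC : ε * C < c := by
        have hC1 : (0:ℝ) < C + 1 := by linarith
        have h3 : ε * (C + 1) ≤ c := (le_div_iff₀ hC1).mp hε'
        nlinarith
      have hh0 : 0 ≤ h (x, u) := norm_nonneg _
      have h4 : ε * h (x, u) ≤ ε * C := by nlinarith
      linarith [h1, hgle, h4, hεC]
    · refine ⟨1, one_pos, ?_⟩
      intro ε _ _ x v hv hv0
      exact absurd ⟨(x, ‖v‖⁻¹ • v), (hscale x v hv hv0).1⟩ hK
  obtain ⟨ε₀, hε₀, hkey⟩ := key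
  refine ⟨ε₀, hε₀, ?_⟩
  intro ε hε hε'
  refine ⟨?_, ?_, hkey ε hε hε'⟩
  · intro x
    have h1 := hconfol x
    have h2 := hconn1 x
    simp only [ContinuousLinearMap.add_apply, ContinuousLinearMap.smul_apply,
      smul_eq_mul, h2]
    linarith
  · intro x w
    simp [ContinuousLinearMap.add_apply, hReeb, hconn2]
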